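/- Let n ≥ 1 and let (f_i)_{i∈ℕ} be a family of polynomials in ℂ[x_1,…,x_n] satisfying the 0-harmonic string relations: for all i ≥ 0 and all k ≥ 1, Σ_{j=1}^n ∂^k f_i/∂x_j^k = −f_{i+k}. Then f_i = 0 for every i > n; that is, 0-harmonic strings on n variables have length at most n (equivalently, the corresponding classical-harmonic polynomial in the n+1 variables x_1,…,x_n,y has degree at most n in y). -/

import Mathlib

open MvPolynomial

/-- The `q`-Steenrod operator `P_k` on `K[x_1,…,x_n]`:
`P_k(p) = ∑ i, x_i^k • (p + q • x_i • ∂p/∂x_i)`. -/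
noncomputable def steenrodP (K : Type) [Field K] (q : K) (n k : ℕ) :
    Module.End K (MvPolynomial (Fin n) K) :=
  ∑ i : Fin n, (LinearMap.mulLeft K (X i ^ k : MvPolynomial (Fin n) K)) ∘ₗ
    (LinearMap.id + q • ((LinearMap.mulLeft K (X i : MvPolynomial (Fin n) K)) ∘ₗ
      (pderiv i).toLinearMap))

/-- The dual `q`-Steenrod operator `P_k^*` on `K[x_1,…,x_n]`:
`P_k^*(p) = ∑ i, (∂^k p/∂x_i^k + q • x_i • ∂^{k+1} p/∂x_i^{k+1})`. -/
noncomputable def steenrodPdual (K : Type) [Field K] (q : K) (n k : ℕ) :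
    Module.End K (MvPolynomial (Fin n) K) :=
  ∑ i : Fin n,
    ((((pderiv i).toLinearMap : Module.End K (MvPolynomial (Fin n) K)) ^ k)
      + q • ((LinearMap.mulLeft K (X i : MvPolynomial (Fin n) K)) ∘ₗ
          ((((pderiv i).toLinearMap : Module.End K (MvPolynomial (Fin n) K)) ^ (k+1) : Module.End K (MvPolynomial (Fin n) K)) : MvPolynomial (Fin n) K →ₗ[K] MvPolynomial (Fin n) K)))

/-- The bilinear form `B(p,r) = ∑_m m! ⬝ p_m ⬝ r_m` over exponent vectors `m`. -/
noncomputable def formB {K : Type} [Field K] {n : ℕ} (p r : MvPolynomial (Fin n) K) : K :=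
  ∑ m ∈ p.support, (∏ i, ((m i).factorial : K)) * p.coeff m * r.coeff m

/-- `p` is `q`-harmonic if it is killed by all the dual `q`-Steenrod operators. -/
def IsQHarmonic {K : Type} [Field K] {n : ℕ} (q : K) (p : MvPolynomial (Fin n) K) : Prop :=
  ∀ k : ℕ, 1 ≤ k → steenrodPdual K q n k p = 0

/-- The space of `q`-hit polynomials: the span of the ranges of the `P_k`, `k ≥ 1`. -/
noncomputable def qHit (K : Type) [Field K] (q : K) (n : ℕ) :
    Submodule K (MvPolynomial (Fin n) K) :=
  Submodule.span K (⋃ k ∈ {k : ℕ | 1 ≤ k}, Set.range (steenrodP K q n k))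

/-- For a list `λ = [λ_1, …, λ_m]`, the operator `P_λ = P_{λ_1} ∘ ⋯ ∘ P_{λ_m}`. -/
noncomputable def steenrodPList (K : Type) [Field K] (q : K) (n : ℕ) (l : List ℕ) :
    Module.End K (MvPolynomial (Fin n) K) :=
  (l.map (steenrodP K q n)).prod


set_option maxHeartbeats 1000000
set_option synthInstance.maxHeartbeats 400000

noncomputable section ZHAux

/-- partial derivative as an endomorphism -/
def dOp (n : ℕ) (i : Fin n) : Module.End ℂ (MvPolynomial (Fin n) ℂ) :=
  (pderiv i).toLinearMap

lemma dOp_comm (n : ℕ) (i j : Fin n) : dOp n i * dOp n j = dOp n j * dOp n i := by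
  apply LinearMap.ext; intro p
  simp only [Module.End.mul_apply, dOp, LinearMap.coe_mk, AddHom.coe_mk,
    Derivation.coeFn_coe]
  induction p using MvPolynomial.induction_on with
  | C a => simp
  | add p q hp hq => simp [hp, hq]
  | mul_X p k hp =>
    simp only [pderiv_mul, map_add, pderiv_mul, hp]
    have h1 : ∀ (a b : Fin n), pderiv a (pderiv b (X k : MvPolynomial (Fin n) ℂ)) = 0 := by
      intro a b
      by_cases h : k = b
      · subst h; simp
      · rw [pderiv_X_of_ne h]; simp
    rw [h1, h1]
    ring

/-- the commutative subalgebra generated by the partial derivatives -/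
def Asub (n : ℕ) : Subalgebra ℂ (Module.End ℂ (MvPolynomial (Fin n) ℂ)) :=
  Algebra.adjoin ℂ (Set.range (dOp n))

instance (n : ℕ) : CommRing (Asub n) :=
  { (inferInstance : Ring (Asub n)) with
    mul_comm := (Algebra.adjoinCommSemiringOfComm ℂ (s := Set.range (dOp n))
      (by rintro a ⟨i, rfl⟩ b ⟨j, rfl⟩; exact dOp_comm n i j)).mul_comm }

def aSub (n : ℕ) (i : Fin n) : Asub n :=
  ⟨dOp n i, Algebra.subset_adjoin ⟨i, rfl⟩⟩

lemma steenrodPdual_zero_eq (n k : ℕ) :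
    steenrodPdual ℂ 0 n k = ∑ i : Fin n, (dOp n i) ^ k := by
  simp [steenrodPdual, dOp]

/-- the evaluation of a `Polynomial (Asub n)` against the string `f` -/
def Psi (n : ℕ) (f : ℕ → MvPolynomial (Fin n) ℂ) :
    Polynomial (Asub n) →+ MvPolynomial (Fin n) ℂ :=
  AddMonoidHom.mk'
    (fun G => G.sum fun j c => (c : Module.End ℂ (MvPolynomial (Fin n) ℂ)) (f j))
    (fun p q => Polynomial.sum_add_index p q
      (fun j c => (c : Module.End ℂ (MvPolynomial (Fin n) ℂ)) (f j))
      (fun i => by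
        show ((0 : Asub n) : Module.End ℂ (MvPolynomial (Fin n) ℂ)) (f i) = 0
        rw [ZeroMemClass.coe_zero]; exact LinearMap.zero_apply _)
      (fun a b₁ b₂ => by
        show ((b₁ + b₂ : Asub n) : Module.End ℂ (MvPolynomial (Fin n) ℂ)) (f a)
          = ((b₁ : Asub n) : Module.End ℂ (MvPolynomial (Fin n) ℂ)) (f a)
            + ((b₂ : Asub n) : Module.End ℂ (MvPolynomial (Fin n) ℂ)) (f a)
        rw [AddMemClass.coe_add]; exact LinearMap.add_apply _ _ _))

lemma Psi_apply (n : ℕ) (f : ℕ → MvPolynomial (Fin n) ℂ) (G : Polynomial (Asub n)) :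
    Psi n f G = G.sum fun j c => (c : Module.End ℂ (MvPolynomial (Fin n) ℂ)) (f j) :=
  rfl

lemma Psi_monomial (n : ℕ) (f : ℕ → MvPolynomial (Fin n) ℂ) (j : ℕ) (c : Asub n) :
    Psi n f (Polynomial.monomial j c) = (c : Module.End ℂ (MvPolynomial (Fin n) ℂ)) (f j) := by
  rw [Psi_apply, Polynomial.sum_monomial_index]
  rw [ZeroMemClass.coe_zero]; exact LinearMap.zero_apply _

lemma coe_sum_pow (n k : ℕ) :
    ((∑ i : Fin n, aSub n i ^ k : Asub n) : Module.End ℂ (MvPolynomial (Fin n) ℂ))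
      = ∑ i : Fin n, dOp n i ^ k := by
  rw [AddSubmonoidClass.coe_finset_sum]
  exact Finset.sum_congr rfl fun i _ => by rw [SubmonoidClass.coe_pow]; rfl

lemma Psi_pi (n : ℕ) (f : ℕ → MvPolynomial (Fin n) ℂ)
    (hstr : ∀ (i k : ℕ), 1 ≤ k → steenrodPdual ℂ 0 n k (f i) = -(f (i + k)))
    (k : ℕ) (hk : 1 ≤ k) (G : Polynomial (Asub n)) :
    Psi n f ((Polynomial.C (∑ i : Fin n, aSub n i ^ k) + Polynomial.X ^ k) * G) = 0 := by
  induction G using Polynomial.induction_on' with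
  | add p q hp hq => rw [mul_add, map_add, hp, hq, add_zero]
  | monomial j c =>
    set P : Asub n := ∑ i : Fin n, aSub n i ^ k with hP
    rw [add_mul, Polynomial.C_mul_monomial, Polynomial.X_pow_eq_monomial,
      Polynomial.monomial_mul_monomial, map_add, Psi_monomial, Psi_monomial,
      mul_comm P c, one_mul]
    have h1 : ((c * P : Asub n) : Module.End ℂ (MvPolynomial (Fin n) ℂ))
        = (c : Module.End ℂ (MvPolynomial (Fin n) ℂ))
          * (P : Module.End ℂ (MvPolynomial (Fin n) ℂ)) := rfl
    rw [h1, Module.End.mul_apply, hP, coe_sum_pow, ← steenrodPdual_zero_eq,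
      hstr j k hk, map_neg]
    rw [add_comm k j]
    exact neg_add_cancel _

/-- the `n+1` "variables": the `∂ᵢ` (as constants) together with the polynomial variable -/
def vSnoc (n : ℕ) : Fin (n + 1) → Polynomial (Asub n) :=
  Fin.snoc (fun i => Polynomial.C (aSub n i)) Polynomial.X

/-- the span of the multiples of the `n+1`-variable power sums -/
def Sspan (n : ℕ) : Submodule (Polynomial (Asub n)) (Polynomial (Asub n)) :=
  Submodule.span _
    (Set.range fun j : Fin (n + 1) => aeval (vSnoc n) (psum (Fin (n + 1)) ℂ (j.val + 1)))

lemma aeval_psum_vSnoc (n k : ℕ) :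
    aeval (vSnoc n) (psum (Fin (n + 1)) ℂ k)
      = Polynomial.C (∑ i : Fin n, aSub n i ^ k) + Polynomial.X ^ k := by
  rw [psum, map_sum, Fin.sum_univ_castSucc]
  simp only [map_pow, aeval_X, vSnoc, Fin.snoc_castSucc, Fin.snoc_last]
  congr 1
  rw [map_sum]
  exact Finset.sum_congr rfl fun i _ => (Polynomial.C_pow).symm

lemma psum_mem_Sspan (n k : ℕ) (hk1 : 1 ≤ k) (hk2 : k ≤ n + 1) :
    aeval (vSnoc n) (psum (Fin (n + 1)) ℂ k) ∈ Sspan n := by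
  have harg : ((⟨k - 1, by omega⟩ : Fin (n + 1)) : ℕ) + 1 = k := by
    simp only [Fin.val_mk]; omega
  have : aeval (vSnoc n) (psum (Fin (n + 1)) ℂ k)
      = (fun j : Fin (n + 1) => aeval (vSnoc n) (psum (Fin (n + 1)) ℂ (j.val + 1)))
          ⟨k - 1, by omega⟩ := by
    simp only
    rw [harg]
  rw [this]
  exact Submodule.subset_span (Set.mem_range_self _)

lemma esymm_mem_Sspan (n k : ℕ) (hk1 : 1 ≤ k) (hk2 : k ≤ n + 1) :
    aeval (vSnoc n) (esymm (Fin (n + 1)) ℂ k) ∈ Sspan n := by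
  have hnewton := congrArg (aeval (vSnoc n)) (mul_esymm_eq_sum (Fin (n + 1)) ℂ k)
  rw [map_mul, map_natCast, map_mul, map_sum] at hnewton
  have hy : ((k : Polynomial (Asub n)))
      * aeval (vSnoc n) (esymm (Fin (n + 1)) ℂ k) ∈ Sspan n := by
    rw [hnewton, ← smul_eq_mul]
    apply Submodule.smul_mem
    apply Submodule.sum_mem
    intro a ha
    simp only [Finset.mem_filter, Finset.HasAntidiagonal.mem_antidiagonal] at ha
    rw [map_mul, map_mul]
    have hterm : aeval (vSnoc n) ((-1 : MvPolynomial (Fin (n+1)) ℂ) ^ a.1)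
          * aeval (vSnoc n) (esymm (Fin (n + 1)) ℂ a.1)
          * aeval (vSnoc n) (psum (Fin (n + 1)) ℂ a.2)
        = (aeval (vSnoc n) ((-1 : MvPolynomial (Fin (n+1)) ℂ) ^ a.1)
            * aeval (vSnoc n) (esymm (Fin (n + 1)) ℂ a.1))
          • aeval (vSnoc n) (psum (Fin (n + 1)) ℂ a.2) := by
      rw [smul_eq_mul]
    rw [hterm]
    exact Submodule.smul_mem _ _ (psum_mem_Sspan n a.2 (by omega) (by omega))
  have hkC : (k : ℂ) ≠ 0 := by exact_mod_cast Nat.one_le_iff_ne_zero.mp hk1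
  have hx : aeval (vSnoc n) (esymm (Fin (n + 1)) ℂ k)
      = (k : ℂ)⁻¹ • (((k : Polynomial (Asub n)))
          * aeval (vSnoc n) (esymm (Fin (n + 1)) ℂ k)) := by
    rw [← nsmul_eq_mul, ← Nat.cast_smul_eq_nsmul ℂ, smul_smul, inv_mul_cancel₀ hkC, one_smul]
  rw [hx]
  exact Submodule.smul_of_tower_mem _ _ hy

lemma X_pow_mem_Sspan (n : ℕ) :
    (Polynomial.X : Polynomial (Asub n)) ^ (n + 1) ∈ Sspan n := by
  classical
  set B := Polynomial (Asub n)
  set s : Multiset B := Multiset.map (vSnoc n) Finset.univ.val with hs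
  have hcard : Multiset.card s = n + 1 := by simp [hs]
  have hlast : vSnoc n (Fin.last n) = (Polynomial.X : B) := by
    simp [vSnoc]
  have h0 := congrArg (Polynomial.eval (Polynomial.X : B))
    (Multiset.prod_X_sub_X_eq_sum_esymm s)
  rw [Polynomial.eval_multiset_prod] at h0
  have hmem0 : (0 : B) ∈ Multiset.map (Polynomial.eval (Polynomial.X : B))
      (Multiset.map (fun t => Polynomial.X - Polynomial.C t) s) := by
    rw [Multiset.map_map]
    apply Multiset.mem_map.mpr
    refine ⟨Polynomial.X, ?_, by simp⟩
    rw [hs]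
    exact Multiset.mem_map.mpr ⟨Fin.last n, by simp, hlast⟩
  rw [Multiset.prod_eq_zero hmem0, Polynomial.eval_finset_sum] at h0
  simp only [Polynomial.eval_mul, Polynomial.eval_pow, Polynomial.eval_neg,
    Polynomial.eval_one, Polynomial.eval_C, Polynomial.eval_X, hcard] at h0
  rw [Finset.sum_range_succ'] at h0
  have hg0 : (-1 : B) ^ 0 * (s.esymm 0 * Polynomial.X ^ (n + 1 - 0))
      = Polynomial.X ^ (n + 1) := by
    have he0 : s.esymm 0 = 1 := by
      simp [Multiset.esymm]
    rw [he0, pow_zero, one_mul, one_mul, Nat.sub_zero]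
  rw [hg0] at h0
  have hX : (Polynomial.X : B) ^ (n + 1)
      = -∑ j ∈ Finset.range (n + 1),
          (-1 : B) ^ (j + 1) * (s.esymm (j + 1) * Polynomial.X ^ (n + 1 - (j + 1))) := by
    rw [eq_neg_iff_add_eq_zero, add_comm]
    exact h0.symm
  rw [hX]
  apply Submodule.neg_mem
  apply Submodule.sum_mem
  intro j hj
  have hesymm_aeval : s.esymm (j + 1) = aeval (vSnoc n) (esymm (Fin (n + 1)) ℂ (j + 1)) :=
    (aeval_esymm_eq_multiset_esymm (Fin (n + 1)) ℂ (j + 1) (vSnoc n)).symm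
  have hterm : (-1 : B) ^ (j + 1) * (s.esymm (j + 1) * Polynomial.X ^ (n + 1 - (j + 1)))
      = ((-1 : B) ^ (j + 1) * Polynomial.X ^ (n + 1 - (j + 1)))
          • (aeval (vSnoc n) (esymm (Fin (n + 1)) ℂ (j + 1))) := by
    rw [smul_eq_mul, hesymm_aeval]; ring
  rw [hterm]
  exact Submodule.smul_mem _ _ (esymm_mem_Sspan n (j + 1) (by omega)
    (by simp only [Finset.mem_range] at hj; omega))

end ZHAux

/-- A `0`-harmonic string on `n` variables, i.e. a family `(f_i)` in
`ℂ[x_1,…,x_n]` with `∑_j ∂^k f_i/∂x_j^k = −f_{i+k}` for all `i ≥ 0`, `k ≥ 1`, satisfies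
`f_i = 0` for all `i > n`: such strings have length at most `n`. -/
theorem zeroHarmonicString_length_le (n : ℕ) (hn : 1 ≤ n)
    (f : ℕ → MvPolynomial (Fin n) ℂ)
    (hstr : ∀ (i k : ℕ), 1 ≤ k →
      steenrodPdual ℂ 0 n k (f i) = -(f (i + k))) :
    ∀ i, n < i → f i = 0 := by
  classical
  have hf : f (n + 1) = 0 := by
    have hXmem := X_pow_mem_Sspan n
    rw [Sspan, Submodule.mem_span_range_iff_exists_fun] at hXmem
    obtain ⟨c, hc⟩ := hXmem
    have h1 : f (n + 1) = Psi n f ((Polynomial.X : Polynomial (Asub n)) ^ (n + 1)) := by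
      rw [Polynomial.X_pow_eq_monomial, Psi_monomial, OneMemClass.coe_one]
      rfl
    rw [h1, ← hc, map_sum]
    apply Finset.sum_eq_zero
    intro j _
    rw [smul_eq_mul, mul_comm, aeval_psum_vSnoc]
    exact Psi_pi n f hstr _ (by omega) _
  intro i hi
  rcases Nat.lt_or_ge (n + 1) i with h | h
  · have hk : 1 ≤ i - (n + 1) := by omega
    have hthis := hstr (n + 1) (i - (n + 1)) hk
    rw [hf, map_zero] at hthis
    have hi' : n + 1 + (i - (n + 1)) = i := by omega
    rw [hi'] at hthis
    exact neg_eq_zero.mp hthis.symm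
  · have : i = n + 1 := by omega
    rw [this]; exact hf
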